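/- For t > 0, define g(t) = (1/√π) ∫_{−π/t}^{π/t} exp(−x²·φ(i·x·t)) dx (a complex-valued integral), where φ(z) = 2(e^z − 1 − z)/z², φ(0) = 1. Then lim_{t→0⁺} g(t) = 1. -/

import Mathlib

noncomputable def φC (z : ℂ) : ℂ :=
  if z = 0 then 1 else 2 * (Complex.exp z - 1 - z) / z ^ 2

noncomputable def g (t : ℝ) : ℂ :=
  (Real.sqrt Real.pi : ℂ)⁻¹ *
    ∫ x in (-(Real.pi / t))..(Real.pi / t),
      Complex.exp (-((x : ℂ) ^ 2 * φC (Complex.I * x * t)))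

open Complex Real MeasureTheory Filter Set intervalIntegral

lemma φC_sub_one_bound {z : ℂ} (hz : ‖z‖ ≤ 1) (hz0 : z ≠ 0) :
    ‖φC z - 1‖ ≤ 4 / 9 * ‖z‖ := by
  have h3 := Complex.exp_bound hz (n := 3) (by norm_num)
  have hsum : (∑ m ∈ Finset.range 3, z ^ m / m.factorial) = 1 + z + z ^ 2 / 2 := by
    rw [Finset.sum_range_succ, Finset.sum_range_succ, Finset.sum_range_one]
    norm_num [Nat.factorial]
  rw [hsum] at h3
  norm_num [Nat.factorial] at h3
  have hz2 : z ^ 2 ≠ 0 := pow_ne_zero _ hz0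
  have hpos : 0 < ‖z‖ := norm_pos_iff.mpr hz0
  have key : φC z - 1 = 2 * (Complex.exp z - (1 + z + z ^ 2 / 2)) / z ^ 2 := by
    rw [φC, if_neg hz0]
    field_simp
    ring
  rw [key, norm_div, norm_mul, Complex.norm_two, norm_pow]
  rw [div_le_iff₀ (by positivity)]
  nlinarith [h3, hpos]

lemma φC_cont_at_zero : Filter.Tendsto φC (nhds 0) (nhds 1) := by
  rw [tendsto_iff_norm_sub_tendsto_zero]
  have hg0 : Filter.Tendsto (fun z : ℂ => 4 / 9 * ‖z‖) (nhds 0) (nhds 0) := by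
    have := (continuous_norm.tendsto (0:ℂ)).const_mul ((4:ℝ)/9)
    simpa using this
  apply squeeze_zero_norm' _ hg0
  filter_upwards [Metric.ball_mem_nhds (0:ℂ) one_pos] with z hz
  rcases eq_or_ne z 0 with rfl | hz0
  · simp [φC]
  · have h1 : ‖z‖ ≤ 1 := by
      have := mem_ball_iff_norm.mp hz
      simp only [sub_zero] at this
      exact this.le
    simpa using φC_sub_one_bound h1 hz0

lemma φC_continuous : Continuous φC := by
  rw [continuous_iff_continuousAt]
  intro z
  rcases eq_or_ne z 0 with rfl | hz
  · simpa [ContinuousAt, φC] using φC_cont_at_zero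
  · have hopen : IsOpen {w : ℂ | w ≠ 0} := isOpen_ne
    have hc : ContinuousAt (fun w : ℂ => 2 * (Complex.exp w - 1 - w) / w ^ 2) z :=
      ContinuousAt.div (by fun_prop) (by fun_prop) (pow_ne_zero _ hz)
    apply hc.congr
    filter_upwards [hopen.mem_nhds hz] with w hw
    simp [φC, hw]

lemma φC_re_ge {θ : ℝ} (hθ : |θ| ≤ π) : 4 / π ^ 2 ≤ (φC (Complex.I * θ)).re := by
  rcases eq_or_ne θ 0 with rfl | hθ0
  · rw [show Complex.I * ((0:ℝ):ℂ) = 0 by simp, φC, if_pos rfl, Complex.one_re]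
    rw [div_le_one (by positivity)]
    nlinarith [Real.pi_gt_three]
  · have hz : Complex.I * (θ:ℂ) ≠ 0 := by
      simp [Complex.I_ne_zero, hθ0]
    have hsq : (Complex.I * (θ:ℂ)) ^ 2 = ((-(θ^2) : ℝ) : ℂ) := by
      push_cast
      rw [mul_pow, Complex.I_sq]
      ring
    have hre : (φC (Complex.I * θ)).re = 2 * (1 - Real.cos θ) / θ ^ 2 := by
      rw [φC, if_neg hz, hsq]
      rw [Complex.div_ofReal_re]
      rw [show Complex.I * (θ:ℂ) = (θ:ℂ) * Complex.I from mul_comm _ _]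
      simp [Complex.exp_ofReal_mul_I_re, Complex.mul_re, Complex.exp_ofReal_mul_I_im]
      field_simp
      ring
    rw [hre]
    have hcos : Real.cos θ ≤ 1 - 2 / π ^ 2 * θ ^ 2 := Real.cos_le_one_sub_mul_cos_sq hθ
    have hπ : (0:ℝ) < π ^ 2 := by positivity
    have h4 : 2 / π ^ 2 * θ ^ 2 * π ^ 2 = 2 * θ ^ 2 := by field_simp
    have h5 : 2 / π ^ 2 * θ ^ 2 * π ^ 2 ≤ (1 - Real.cos θ) * π ^ 2 := by
      gcongr
      linarith
    rw [h4] at h5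
    rw [le_div_iff₀ (by positivity : (0:ℝ) < θ ^ 2), div_mul_eq_mul_div, div_le_iff₀ hπ]
    nlinarith

lemma norm_exp_bound {t x : ℝ} (ht : 0 < t) (hx : |x * t| ≤ π) :
    ‖Complex.exp (-((x : ℂ) ^ 2 * φC (Complex.I * x * t)))‖ ≤ Real.exp (-(4 / π ^ 2) * x ^ 2) := by
  rw [Complex.norm_exp]
  apply Real.exp_le_exp.mpr
  have harg : Complex.I * (x:ℂ) * (t:ℂ) = Complex.I * ((x * t : ℝ) : ℂ) := by
    push_cast; ring
  rw [harg]
  have hre : (-((x : ℂ) ^ 2 * φC (Complex.I * ((x*t:ℝ):ℂ)))).re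
      = -(x ^ 2 * (φC (Complex.I * ((x*t:ℝ):ℂ))).re) := by
    rw [Complex.neg_re]
    congr 1
    rw [show (x : ℂ) ^ 2 = ((x ^ 2 : ℝ) : ℂ) by push_cast; ring, Complex.re_ofReal_mul]
  rw [hre]
  have := φC_re_ge hx
  nlinarith [sq_nonneg x]

lemma integral_limit : (∫ x : ℝ, Complex.exp (-(x : ℂ) ^ 2)) = (Real.sqrt π : ℂ) := by
  have h1 : ∀ x : ℝ, Complex.exp (-(x : ℂ) ^ 2) = ((Real.exp (-1 * x ^ 2) : ℝ) : ℂ) := by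
    intro x
    rw [Complex.ofReal_exp]
    push_cast
    ring_nf
  have h2 : (∫ x : ℝ, Real.exp (-1 * x ^ 2)) = Real.sqrt π := by
    rw [integral_gaussian]; norm_num
  calc (∫ x : ℝ, Complex.exp (-(x : ℂ) ^ 2))
      = ∫ x : ℝ, ((Real.exp (-1 * x ^ 2) : ℝ) : ℂ) := by simp_rw [h1]
    _ = ((∫ x : ℝ, Real.exp (-1 * x ^ 2) : ℝ) : ℂ) := _root_.integral_ofReal
    _ = (Real.sqrt π : ℂ) := by rw [h2]

theorem g_tendsto_one :
    Filter.Tendsto g (nhdsWithin 0 (Set.Ioi 0)) (nhds 1) := by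
  have hb : (0:ℝ) < 4 / π ^ 2 := by positivity
  have key : Filter.Tendsto
      (fun t => ∫ x : ℝ, (Set.Ioc (-(π / t)) (π / t)).indicator
        (fun x : ℝ => Complex.exp (-((x : ℂ) ^ 2 * φC (Complex.I * x * t)))) x)
      (nhdsWithin 0 (Set.Ioi 0))
      (nhds (∫ x : ℝ, Complex.exp (-(x : ℂ) ^ 2))) := by
    apply MeasureTheory.tendsto_integral_filter_of_dominated_convergence
      (fun x => Real.exp (-(4 / π ^ 2) * x ^ 2))
    · filter_upwards with t
      apply AEStronglyMeasurable.indicator _ measurableSet_Ioc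
      apply Continuous.aestronglyMeasurable
      have hφ : Continuous fun x : ℝ => φC (Complex.I * x * t) := by
        apply φC_continuous.comp
        fun_prop
      exact Complex.continuous_exp.comp (((continuous_ofReal.pow 2).mul hφ).neg)
    · filter_upwards [self_mem_nhdsWithin] with t ht
      filter_upwards with x
      simp only [Set.indicator_apply]
      split_ifs with hx
      · apply norm_exp_bound ht
        rw [abs_mul, abs_of_pos (show (0:ℝ) < t from ht)]
        rw [Set.mem_Ioc] at hx
        have hxle : |x| ≤ π / t := abs_le.mpr ⟨hx.1.le, hx.2⟩
        calc |x| * t ≤ (π / t) * t := mul_le_mul_of_nonneg_right hxle ht.le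
          _ = π := div_mul_cancel₀ _ ht.ne'
      · simp [Real.exp_nonneg]
    · exact integrable_exp_neg_mul_sq hb
    · filter_upwards with x
      have hev : (fun t : ℝ => Complex.exp (-((x : ℂ) ^ 2 * φC (Complex.I * x * t))))
          =ᶠ[nhdsWithin 0 (Set.Ioi 0)]
          (fun t : ℝ => (Set.Ioc (-(π / t)) (π / t)).indicator
            (fun x : ℝ => Complex.exp (-((x : ℂ) ^ 2 * φC (Complex.I * x * t)))) x) := by
        have hmem : Set.Ioo (0:ℝ) (π / (|x| + 1)) ∈ nhdsWithin (0:ℝ) (Set.Ioi 0) := by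
          apply Ioo_mem_nhdsGT_of_mem
          exact ⟨le_refl _, div_pos Real.pi_pos (by positivity)⟩
        filter_upwards [hmem] with t ht
        obtain ⟨ht0, ht1⟩ := ht
        have hππ : |x| + 1 < π / t := by
          rw [lt_div_iff₀ ht0]
          rw [lt_div_iff₀ (by positivity : (0:ℝ) < |x| + 1)] at ht1
          nlinarith
        have hxm : x ∈ Set.Ioc (-(π / t)) (π / t) := by
          constructor
          · nlinarith [neg_abs_le x, abs_nonneg x]
          · nlinarith [le_abs_self x, abs_nonneg x]
        exact (Set.indicator_of_mem hxm (fun x : ℝ => Complex.exp (-((x : ℂ) ^ 2 * φC (Complex.I * x * t))))).symm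
      apply Filter.Tendsto.congr' hev
      have h1 : Filter.Tendsto (fun t : ℝ => Complex.I * (x:ℂ) * (t:ℂ))
          (nhdsWithin 0 (Set.Ioi 0)) (nhds 0) := by
        have hc : Continuous fun t : ℝ => Complex.I * (x:ℂ) * (t:ℂ) := by fun_prop
        have h0 := hc.tendsto 0
        simp only [Complex.ofReal_zero, mul_zero] at h0
        exact h0.mono_left nhdsWithin_le_nhds
      have h2 : Filter.Tendsto (fun t : ℝ => φC (Complex.I * x * t))
          (nhdsWithin 0 (Set.Ioi 0)) (nhds 1) := φC_cont_at_zero.comp h1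
      have h3 : Filter.Tendsto (fun t : ℝ => -((x : ℂ) ^ 2 * φC (Complex.I * x * t)))
          (nhdsWithin 0 (Set.Ioi 0)) (nhds (-(x : ℂ) ^ 2)) := by
        have := (h2.const_mul ((x:ℂ)^2)).neg
        simpa using this
      exact (Complex.continuous_exp.tendsto _).comp h3
  rw [integral_limit] at key
  have hg : g =ᶠ[nhdsWithin (0:ℝ) (Set.Ioi 0)]
      (fun t => (Real.sqrt π : ℂ)⁻¹ * ∫ x : ℝ, (Set.Ioc (-(π / t)) (π / t)).indicator
        (fun x : ℝ => Complex.exp (-((x : ℂ) ^ 2 * φC (Complex.I * x * t)))) x) := by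
    filter_upwards [self_mem_nhdsWithin] with t ht
    rw [g]
    congr 1
    rw [intervalIntegral.integral_of_le (by
      have h0 : 0 < π / t := div_pos Real.pi_pos ht
      linarith)]
    rw [← MeasureTheory.integral_indicator measurableSet_Ioc]
  have hπ : (Real.sqrt π : ℂ) ≠ 0 :=
    Complex.ofReal_ne_zero.mpr (Real.sqrt_ne_zero'.mpr Real.pi_pos)
  have hfin := key.const_mul ((Real.sqrt π : ℂ)⁻¹)
  rw [inv_mul_cancel₀ hπ] at hfin
  exact Filter.Tendsto.congr' hg.symm hfin
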